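/- Let n ≥ 2 and let a1, ..., an be nonzero real numbers. Assume the Continuum Hypothesis (2^ℵ0 = ℵ1). Then there exists an ℵ0-coloring of the real numbers such that there are no pairwise distinct reals e1, ..., en of the same color satisfying a1·e1 + a2·e2 + ... + an·en = 0. -/

import Mathlib

/-- Assuming CH, for any `n ≥ 2` and nonzero reals `a 0, …, a (n-1)`, there is an
`ℵ₀`-coloring of `ℝ` with no pairwise distinct monochromatic reals `e 0, …, e (n-1)`
satisfying `∑ i, a i * e i = 0`. -/
theorem CH_implies_no_mono_solution (n : ℕ) (hn : 2 ≤ n) (a : Fin n → ℝ)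
    (ha : ∀ i, a i ≠ 0)
    (ch : (2 : Cardinal) ^ Cardinal.aleph0 = Cardinal.aleph 1) :
    ∃ COL : ℝ → ℕ,
      ¬ ∃ e : Fin n → ℝ,
        Function.Injective e ∧
        (∀ i j, COL (e i) = COL (e j)) ∧
        ∑ i, a i * e i = 0 := by
  classical
  -- `T` is a well-ordered type of order type `ω₁`
  set T := (Cardinal.aleph 1).ord.ToType with hTdef
  have hT : Cardinal.mk T = Cardinal.aleph 1 := Cardinal.mk_ord_toType _
  have hmkR : Cardinal.mk ℝ = Cardinal.aleph 1 := by
    apply Cardinal.lift_injective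
    rw [Cardinal.mk_real, Cardinal.lift_continuum, Cardinal.lift_aleph, Ordinal.lift_one,
      ← Cardinal.two_power_aleph0]
    exact ch
  have hR : Cardinal.mk T = Cardinal.mk ℝ := by rw [hT, hmkR]
  obtain ⟨φ⟩ : Nonempty (T ≃ ℝ) := Cardinal.eq.1 hR
  -- increasing chain of countable subfields covering ℝ
  set X : T → Subfield ℝ := fun x => Subfield.closure ((φ '' Set.Iic x) ∪ Set.range a)
    with hXdef
  have hmono : ∀ {x y : T}, x ≤ y → (X x : Set ℝ) ⊆ X y := by
    intro x y hxy
    apply Subfield.closure_mono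
    exact Set.union_subset_union_left _ (Set.image_mono (Set.Iic_subset_Iic.2 hxy))
  have hself : ∀ r : ℝ, r ∈ X (φ.symm r) := fun r =>
    Subfield.subset_closure (Or.inl ⟨φ.symm r, by simp, by simp⟩)
  have hA : ∀ (x : T) (i : Fin n), a i ∈ X x := fun x i =>
    Subfield.subset_closure (Or.inr ⟨i, rfl⟩)
  -- each `X x` is countable
  have hcount : ∀ x : T, ((X x : Set ℝ)).Countable := by
    intro x
    have h1 : (Set.Iic x).Countable := by
      rw [← Set.Iio_insert]
      exact Set.Countable.insert _
        ((Cardinal.countable_iff_lt_aleph_one _).2 (Cardinal.mk_Iio_ord_toType x))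
    have h2 : ((φ '' Set.Iic x) ∪ Set.range a).Countable :=
      (h1.image φ).union (Set.countable_range a)
    rw [← Set.countable_coe_iff, ← Cardinal.mk_le_aleph0_iff] at h2 ⊢
    calc Cardinal.mk (X x : Set ℝ)
        ≤ max (Cardinal.mk ((φ '' Set.Iic x) ∪ Set.range a : Set ℝ)) Cardinal.aleph0 :=
          Subfield.cardinalMk_closure_le_max _
      _ ≤ Cardinal.aleph0 := max_le h2 le_rfl
  -- the rank function
  have wf : WellFounded ((· < ·) : T → T → Prop) := IsWellFounded.wf
  set ρ : ℝ → T := fun r => wf.min {x | r ∈ X x} ⟨φ.symm r, hself r⟩ with hρdef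
  have hρmem : ∀ r : ℝ, r ∈ X (ρ r) := fun r =>
    wf.min_mem {x | r ∈ X x} ⟨φ.symm r, hself r⟩
  have hρle : ∀ (r : ℝ) (x : T), r ∈ X x → ρ r ≤ x := fun r x hx =>
    not_lt.1 (wf.not_lt_min {x | r ∈ X x} hx)
  -- injections on each level
  have hg : ∀ x : T, ∃ g : ℝ → ℕ, Set.InjOn g (X x : Set ℝ) := by
    intro x
    obtain ⟨f, hf⟩ := Set.countable_iff_exists_injective.1 (hcount x)
    refine ⟨fun r => if h : r ∈ (X x : Set ℝ) then f ⟨r, h⟩ else 0, ?_⟩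
    intro r hr s hs hrs
    simp only [dif_pos hr, dif_pos hs] at hrs
    exact Subtype.ext_iff.1 (hf hrs)
  choose g hginj using hg
  refine ⟨fun r => g (ρ r) r, ?_⟩
  rintro ⟨e, einj, ecol, esum⟩
  -- same color and same rank imply equality
  have key : ∀ r s : ℝ, ρ r = ρ s → g (ρ r) r = g (ρ s) s → r = s := by
    intro r s hρ hc
    rw [hρ] at hc
    exact hginj (ρ s) (hρ ▸ hρmem r) (hρmem s) hc
  -- the element of maximal rank
  have : Nonempty (Fin n) := ⟨⟨0, by omega⟩⟩
  obtain ⟨j, hj⟩ := Finite.exists_max fun i => ρ (e i)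
  have hlt : ∀ i, i ≠ j → ρ (e i) < ρ (e j) := by
    intro i hij
    refine lt_of_le_of_ne (hj i) fun h => hij (einj (key _ _ h (ecol i j)))
  -- the second-largest rank
  have hne : (Finset.univ.erase j).Nonempty := by
    rw [← Finset.card_pos, Finset.card_erase_of_mem (Finset.mem_univ j)]
    simp [Finset.card_univ]
    omega
  obtain ⟨k, hk, hkmax⟩ := Finset.exists_max_image (Finset.univ.erase j)
    (fun i => ρ (e i)) hne
  have hkj : ρ (e k) < ρ (e j) := hlt k (Finset.ne_of_mem_erase hk)
  -- `e j` is determined by the others, hence lies in `X (ρ (e k))`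
  have hsum : a j * e j = -∑ i ∈ Finset.univ.erase j, a i * e i := by
    rw [eq_neg_iff_add_eq_zero, ← Finset.add_sum_erase _ _ (Finset.mem_univ j)] at *
    exact esum
  have hej : e j = (a j)⁻¹ * -∑ i ∈ Finset.univ.erase j, a i * e i := by
    rw [← hsum, inv_mul_cancel_left₀ (ha j)]
  have hmemj : e j ∈ X (ρ (e k)) := by
    rw [hej]
    refine mul_mem (Subfield.inv_mem _ (hA _ j)) (neg_mem (sum_mem ?_))
    intro i hi
    exact mul_mem (hA _ i) (hmono (hkmax i hi) (hρmem (e i)))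
  exact absurd (hρle (e j) _ hmemj) (not_le.2 hkj)
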